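/- Let T be a finite tree with at least 2 vertices, and let G be the graph obtained from T by isomorphic leaf matching. Then G is a minimal bipartite matching covered graph: G is connected, bipartite, has at least 4 vertices, every edge of G lies in a perfect matching of G, and for every edge e of G the graph obtained from G by deleting e is not matching covered. -/

import Mathlib

open SimpleGraph

/-- The degree of a vertex `v` in a graph `G`: the number of neighbours of `v`. -/
noncomputable def degN {V : Type*} (G : SimpleGraph V) (v : V) : ℕ :=
  (G.neighborSet v).ncard

/-- A finite simple graph is matching covered if it is connected, has at least 4 vertices,
and every edge lies in some perfect matching. -/
def MatchingCovered {V : Type*} [Fintype V] (G : SimpleGraph V) : Prop :=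
  G.Connected ∧ 4 ≤ Fintype.card V ∧
    ∀ e ∈ G.edgeSet, ∃ M : G.Subgraph, M.IsPerfectMatching ∧ e ∈ M.edgeSet

/-- A matching covered graph is minimal if deleting any edge destroys the property. -/
def MinimalMatchingCovered {V : Type*} [Fintype V] (G : SimpleGraph V) : Prop :=
  MatchingCovered G ∧ ∀ e ∈ G.edgeSet, ¬ MatchingCovered (G.deleteEdges {e})

/-- The graph obtained from a tree `T` by isomorphic leaf matching: two disjoint copies of `T`
(the `inl` copy and the `inr` copy), together with an edge joining the two copies of each
leaf (degree-1 vertex) of `T`. -/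
def leafMatching {V : Type*} (T : SimpleGraph V) : SimpleGraph (V ⊕ V) where
  Adj x y :=
    match x, y with
    | Sum.inl u, Sum.inl v => T.Adj u v
    | Sum.inr u, Sum.inr v => T.Adj u v
    | Sum.inl u, Sum.inr v => u = v ∧ degN T u = 1
    | Sum.inr u, Sum.inl v => u = v ∧ degN T v = 1
  symm := by
    constructor
    rintro (u | u) (v | v) h
    · exact T.adj_symm h
    · exact ⟨h.1.symm, h.2⟩
    · exact ⟨h.1.symm, h.2⟩
    · exact T.adj_symm h
  loopless := by
    constructor
    rintro (u | u) h
    · exact T.loopless.irrefl u h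
    · exact T.loopless.irrefl u h


section Infra
universe u
variable {V : Type u}

def MFun (T : SimpleGraph V) (f : V → Option V) : Prop :=
  (∀ x y, f x = some y → T.Adj x y) ∧ (∀ x y, f x = some y → f y = some x)

lemma degN_eq_degree [Fintype V] (T : SimpleGraph V) [DecidableRel T.Adj] (v : V) :
    degN T v = T.degree v := by
  rw [degN, Set.ncard_eq_toFinset_card', SimpleGraph.degree]
  congr 1

lemma exists_adj_of_tree [Fintype V] {T : SimpleGraph V} (hT : T.IsTree)
    (h2 : 2 ≤ Fintype.card V) (v : V) : ∃ w, T.Adj v w := by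
  obtain ⟨u, hu⟩ := Fintype.exists_ne_of_one_lt_card (by omega) v
  obtain ⟨w⟩ := hT.isConnected v u
  cases w with
  | nil => exact absurd rfl hu.symm
  | cons h _ => exact ⟨_, h⟩

lemma two_leaves [Fintype V] {T : SimpleGraph V} (hT : T.IsTree)
    (h2 : 2 ≤ Fintype.card V) (v : V) : ∃ ℓ, ℓ ≠ v ∧ degN T ℓ = 1 := by
  classical
  set L := Finset.univ.filter (fun x => T.degree x = 1) with hL
  have hdeg : ∀ x : V, 1 ≤ T.degree x := by
    intro x
    obtain ⟨w, hw⟩ := exists_adj_of_tree hT h2 x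
    have : 0 < T.degree x := (T.degree_pos_iff_exists_adj x).mpr ⟨w, hw⟩
    omega
  set S := ∑ x : V, T.degree x with hS
  have hsum : S + 2 = 2 * Fintype.card V := by
    rw [hS]
    rw [T.sum_degrees_eq_twice_card_edges]
    have h := hT.card_edgeFinset
    omega
  have hbound : ∀ x : V, 2 ≤ T.degree x + (if x ∈ L then 1 else 0) := by
    intro x
    by_cases h : T.degree x = 1
    · have hx : x ∈ L := by simp [hL, h]
      simp [hx, h]
    · have h1 := hdeg x
      have h2 : 2 ≤ T.degree x := by omega
      exact le_trans h2 (Nat.le_add_right _ _)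
  have h2card : 2 * Fintype.card V ≤ S + L.card := by
    rw [hS]
    calc 2 * Fintype.card V = ∑ _x : V, 2 := by simp [mul_comm]
    _ ≤ ∑ x : V, (T.degree x + (if x ∈ L then 1 else 0)) := Finset.sum_le_sum (fun x _ => hbound x)
    _ = (∑ x : V, T.degree x) + ∑ x : V, (if x ∈ L then 1 else 0) := Finset.sum_add_distrib
    _ = (∑ x : V, T.degree x) + L.card := by
        congr 1
        simp [hL, Finset.sum_ite_mem]
  have hLcard : 2 ≤ L.card := by omega
  obtain ⟨ℓ, hmem, hne⟩ := Finset.exists_mem_ne (show 1 < L.card by omega) v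
  simp only [hL, Finset.mem_filter, Finset.mem_univ, true_and] at hmem
  exact ⟨ℓ, hne, by rw [degN_eq_degree]; exact hmem⟩

lemma leaf_unique_nbr {T : SimpleGraph V} {ℓ : V} (h : degN T ℓ = 1) :
    ∃ p, T.neighborSet ℓ = {p} := Set.ncard_eq_one.mp h

lemma leaf_adj_eq {T : SimpleGraph V} {ℓ a b : V} (h : degN T ℓ = 1)
    (ha : T.Adj ℓ a) (hb : T.Adj ℓ b) : a = b := by
  obtain ⟨p, hp⟩ := leaf_unique_nbr h
  have h1 : a ∈ T.neighborSet ℓ := ha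
  have h2 : b ∈ T.neighborSet ℓ := hb
  rw [hp] at h1 h2
  simp at h1 h2; rw [h1, h2]

lemma walk_closed {T : SimpleGraph V} (S : Set V)
    (hS : ∀ a ∈ S, ∀ b, T.Adj a b → b ∈ S) {u v : V} (w : T.Walk u v) (hu : u ∈ S) : v ∈ S := by
  induction w with
  | nil => exact hu
  | cons h _ ih => exact ih (hS _ hu _ h)

end Infra

section B
universe u
variable {V : Type u} {T : SimpleGraph V} {ℓ : V}

lemma isAcyclic_induce (h : T.IsAcyclic) (s : Set V) : (T.induce s).IsAcyclic := by
  intro v c hc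
  exact h ((c.map ⟨Subtype.val, fun h => h⟩)) (hc.map Subtype.val_injective)

lemma exists_walk_avoid (hT : T.IsTree) (hl : degN T ℓ = 1) {u v : V} (hu : u ≠ ℓ)
    (hv : v ≠ ℓ) : ∃ w : T.Walk u v, ℓ ∉ w.support := by
  classical
  obtain ⟨w0⟩ := hT.isConnected u v
  refine ⟨w0.toPath, fun hmem => ?_⟩
  set q : T.Walk u v := (w0.toPath : T.Walk u v) with hq
  have hqp : q.IsPath := w0.toPath.prop
  have hnd : (q.takeUntil ℓ hmem).support.Nodup ∧ (q.dropUntil ℓ hmem).support.tail.Nodup ∧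
      ∀ a ∈ (q.takeUntil ℓ hmem).support, a ∉ (q.dropUntil ℓ hmem).support.tail := by
    have h1 := hqp.support_nodup
    rw [← Walk.take_spec q hmem, Walk.support_append] at h1
    rw [List.nodup_append] at h1
    exact ⟨h1.1, h1.2.1, fun a ha hb => h1.2.2 a ha a hb rfl⟩
  obtain ⟨b, hb, q2', hq2'⟩ := Walk.not_nil_iff.mp
    (Walk.not_nil_of_ne (p := q.dropUntil ℓ hmem) (show ℓ ≠ v from fun h => hv h.symm))
  obtain ⟨a, ha, r', hr'⟩ := Walk.not_nil_iff.mp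
    (Walk.not_nil_of_ne (p := (q.takeUntil ℓ hmem).reverse) (show ℓ ≠ u from fun h => hu h.symm))
  have hamem : a ∈ (q.takeUntil ℓ hmem).support := by
    have : a ∈ (q.takeUntil ℓ hmem).reverse.support := by
      rw [hr', Walk.support_cons]
      exact List.mem_cons_of_mem _ (Walk.start_mem_support r')
    rwa [Walk.support_reverse, List.mem_reverse] at this
  have hbmem : b ∈ (q.dropUntil ℓ hmem).support.tail := by
    rw [hq2', Walk.support_cons]
    exact Walk.start_mem_support q2'
  have hab : a ≠ b := fun h => hnd.2.2 a hamem (h ▸ hbmem)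
  obtain ⟨p, hp⟩ := Set.ncard_eq_one.mp hl
  have h1 : a ∈ T.neighborSet ℓ := ha
  have h2 : b ∈ T.neighborSet ℓ := hb
  rw [hp, Set.mem_singleton_iff] at h1 h2
  exact hab (h1.trans h2.symm)

lemma reachable_induce (s : Set V) : ∀ {u v : V} (w : T.Walk u v),
    (∀ x ∈ w.support, x ∈ s) → ∀ (hu : u ∈ s) (hv : v ∈ s),
    (T.induce s).Reachable ⟨u, hu⟩ ⟨v, hv⟩ := by
  intro u v w
  induction w with
  | nil => intro _ hu hv; exact Reachable.refl _
  | @cons a b c h p ih =>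
    intro hw hu hv
    have hb : b ∈ s := hw b (by simp [Walk.support_cons])
    have hadj : (T.induce s).Adj ⟨a, hu⟩ ⟨b, hb⟩ := h
    exact hadj.reachable.trans
      (ih (fun x hx => hw x (by rw [Walk.support_cons]; exact List.mem_cons_of_mem _ hx)) hb hv)

lemma isTree_induce_ne (hT : T.IsTree) (hl : degN T ℓ = 1) (hx : ∃ x : V, x ≠ ℓ) :
    (T.induce {x | x ≠ ℓ}).IsTree := by
  constructor
  · have : Nonempty ({x | x ≠ ℓ} : Set V) := by
      obtain ⟨x, hx⟩ := hx; exact ⟨⟨x, hx⟩⟩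
    refine Connected.mk ?_
    rintro ⟨u, hu⟩ ⟨v, hv⟩
    obtain ⟨w, hw⟩ := exists_walk_avoid hT hl hu hv
    exact reachable_induce _ w (fun x hx => show x ≠ ℓ from fun hxx => hw (hxx ▸ hx)) hu hv
  · exact isAcyclic_induce hT.2 _

lemma degN_induce_eq {s : Set V} (x : ↥s) (hnb : ∀ y, T.Adj x.val y → y ∈ s) :
    degN (T.induce s) x = degN T x.val := by
  rw [degN, degN, ← Set.ncard_image_of_injective _ (Subtype.val_injective
    (p := fun y => y ∈ s))]
  congr 1
  ext y
  constructor
  · rintro ⟨z, hz, rfl⟩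
    exact hz
  · intro hy
    exact ⟨⟨y, hnb y hy⟩, hy, rfl⟩

lemma leaf_of_induce_leaf (x : ({x | x ≠ ℓ} : Set V))
    (h1 : degN (T.induce {x | x ≠ ℓ}) x = 1) : degN T x.val = 1 ∨ T.Adj x.val ℓ := by
  by_cases hadj : T.Adj x.val ℓ
  · exact Or.inr hadj
  · left
    rw [← degN_induce_eq x (fun y hy hyl => hadj (hyl ▸ hy))]
    exact h1
end B

section C
universe u
variable {V : Type u}

lemma MFun_none (T : SimpleGraph V) : MFun T (fun _ => none) :=
  ⟨fun x y h => by simp at h, fun x y h => by simp at h⟩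

def extM {ℓ : V} [DecidableEq V]
    (f : ↥({x : V | x ≠ ℓ}) → Option ↥({x : V | x ≠ ℓ})) : V → Option V :=
  fun x => if h : x = ℓ then none else (f ⟨x, h⟩).map Subtype.val

variable [DecidableEq V] {T : SimpleGraph V} {ℓ : V}
  {f : ↥({x : V | x ≠ ℓ}) → Option ↥({x : V | x ≠ ℓ})}

lemma extM_ℓ : extM f ℓ = none := dif_pos rfl

lemma extM_ne {x : V} (h : x ≠ ℓ) : extM f x = (f ⟨x, h⟩).map Subtype.val := dif_neg h

lemma extM_MFun (hf : MFun (T.induce {x | x ≠ ℓ}) f) : MFun T (extM f) := by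
  constructor
  · intro x y hxy
    by_cases h : x = ℓ
    · rw [h, extM_ℓ] at hxy; simp at hxy
    · rw [extM_ne h] at hxy
      rcases hmap : f ⟨x, h⟩ with _ | z
      · rw [hmap] at hxy; simp at hxy
      · rw [hmap] at hxy
        simp only [Option.map_some, Option.some.injEq] at hxy
        have := hf.1 _ _ hmap
        rw [← hxy]
        exact this
  · intro x y hxy
    by_cases h : x = ℓ
    · rw [h, extM_ℓ] at hxy; simp at hxy
    · rw [extM_ne h] at hxy
      rcases hmap : f ⟨x, h⟩ with _ | z
      · rw [hmap] at hxy; simp at hxy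
      · rw [hmap] at hxy
        simp only [Option.map_some, Option.some.injEq] at hxy
        have hz := hf.2 _ _ hmap
        have hy : y ≠ ℓ := by rw [← hxy]; exact z.prop
        rw [extM_ne hy]
        have : (⟨y, hy⟩ : ↥({x : V | x ≠ ℓ})) = z := by
          apply Subtype.ext; exact hxy.symm
        rw [this, hz]
        simp

lemma extM_none {x : V} (h : x ≠ ℓ) : extM f x = none ↔ f ⟨x, h⟩ = none := by
  rw [extM_ne h, Option.map_eq_none_iff]

def addE (f : V → Option V) (a b : V) : V → Option V :=
  fun x => if x = a then some b else if x = b then some a else f x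

lemma addE_a {f : V → Option V} {a b : V} : addE f a b a = some b := if_pos rfl

lemma addE_b {f : V → Option V} {a b : V} (hab : a ≠ b) : addE f a b b = some a := by
  unfold addE
  rw [if_neg (fun h => hab h.symm), if_pos rfl]

lemma addE_other {f : V → Option V} {a b x : V} (hxa : x ≠ a) (hxb : x ≠ b) :
    addE f a b x = f x := by
  unfold addE
  rw [if_neg hxa, if_neg hxb]

lemma addE_MFun {f : V → Option V} {a b : V} (hADJ : T.Adj a b) (hf : MFun T f)
    (ha : f a = none) (hb : f b = none) : MFun T (addE f a b) := by
  have hab : a ≠ b := hADJ.ne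
  constructor
  · intro x y hxy
    unfold addE at hxy
    split_ifs at hxy with h1 h2
    · cases hxy; rw [h1]; exact hADJ
    · cases hxy; rw [h2]; exact hADJ.symm
    · exact hf.1 _ _ hxy
  · intro x y hxy
    unfold addE at hxy
    split_ifs at hxy with h1 h2
    · cases hxy; rw [h1, addE_b hab]
    · cases hxy; rw [h2, addE_a]
    · have hy := hf.2 _ _ hxy
      have hya : y ≠ a := fun h => by rw [h] at hy; rw [hy] at ha; cases ha
      have hyb : y ≠ b := fun h => by rw [h] at hy; rw [hy] at hb; cases hb
      rw [addE_other hya hyb, hy]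
end C

section D
universe w

def restrM {V : Type w} [DecidableEq V] (ℓ : V) (f : V → Option V) :
    ↥({x : V | x ≠ ℓ}) → Option ↥({x : V | x ≠ ℓ}) :=
  fun x => (f x.val).bind (fun y => if h : y = ℓ then none else some ⟨y, h⟩)

variable {V : Type w} [DecidableEq V] {T : SimpleGraph V} {ℓ : V} {f g : V → Option V}

lemma restrM_none {x : ↥({x : V | x ≠ ℓ})} :
    restrM ℓ f x = none ↔ f x.val = none ∨ f x.val = some ℓ := by
  unfold restrM
  rcases hfx : f x.val with _ | z
  · simp
  · by_cases hz : z = ℓ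
    · subst hz; simp
    · simp [hz]

lemma restrM_some {x : ↥({x : V | x ≠ ℓ})} {y : V} (hy : f x.val = some y) (hyℓ : y ≠ ℓ) :
    restrM ℓ f x = some ⟨y, hyℓ⟩ := by
  unfold restrM
  rw [hy]
  simp [hyℓ]

lemma restrM_MFun (hf : MFun T f) : MFun (T.induce {x | x ≠ ℓ}) (restrM ℓ f) := by
  constructor
  · rintro x y hxy
    unfold restrM at hxy
    rcases hfx : f x.val with _ | z
    · rw [hfx] at hxy; simp at hxy
    · rw [hfx] at hxy
      by_cases hz : z = ℓ
      · subst hz; simp at hxy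
      · simp only [Option.bind_some, dif_neg hz] at hxy
        have : T.Adj x.val z := hf.1 _ _ hfx
        have hyz : y = ⟨z, hz⟩ := (Option.some.inj hxy).symm
        rw [hyz]
        exact this
  · rintro x y hxy
    unfold restrM at hxy
    rcases hfx : f x.val with _ | z
    · rw [hfx] at hxy; simp at hxy
    · rw [hfx] at hxy
      by_cases hz : z = ℓ
      · subst hz; simp at hxy
      · simp only [Option.bind_some, dif_neg hz] at hxy
        have hsym : f z = some x.val := hf.2 _ _ hfx
        have hyz : y = ⟨z, hz⟩ := (Option.some.inj hxy).symm
        rw [hyz]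
        have : restrM ℓ f ⟨z, hz⟩ = some ⟨x.val, x.prop⟩ := restrM_some hsym x.prop
        rw [this]

end D

section Inds
universe w

lemma matching_unique : ∀ (n : ℕ) {V : Type w} [Fintype V] (T : SimpleGraph V),
    Fintype.card V ≤ n → T.IsTree → ∀ f g : V → Option V, MFun T f → MFun T g →
    (∀ x, f x = none ↔ g x = none) → ∀ x, f x = g x := by
  intro n
  induction n with
  | zero =>
    intro V _ T hn hT f g hf hg hfg x
    have : 0 < Fintype.card V := Fintype.card_pos_iff.mpr ⟨x⟩
    omega
  | succ n ih =>
    intro V _ T hn hT f g hf hg hfg x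
    classical
    by_cases hcard : Fintype.card V ≤ 1
    · haveI := Fintype.card_le_one_iff_subsingleton.mp hcard
      have hnone : ∀ (h : V → Option V), MFun T h → h x = none := by
        intro h hh
        rcases hhx : h x with _ | z
        · rfl
        · have := hh.1 _ _ hhx
          exact absurd (Subsingleton.elim x z) this.ne
      rw [hnone f hf, hnone g hg]
    · push_neg at hcard
      obtain ⟨u0⟩ := Fintype.card_pos_iff.mp (show 0 < Fintype.card V by omega)
      obtain ⟨ℓ, _, hℓ⟩ := two_leaves hT hcard u0
      obtain ⟨x0, hx0⟩ := Fintype.exists_ne_of_one_lt_card hcard ℓ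
      have hT' : (T.induce {x | x ≠ ℓ}).IsTree := isTree_induce_ne hT hℓ ⟨x0, hx0⟩
      have hlt : Fintype.card ↥({x : V | x ≠ ℓ}) < Fintype.card V :=
        Fintype.card_subtype_lt (p := fun y => y ≠ ℓ) (x := ℓ) (by simp)
      rcases hfℓ : f ℓ with _ | p
      · -- ℓ uncovered
        have hgℓ : g ℓ = none := (hfg ℓ).mp hfℓ
        have hnof : ∀ a b, f a = some b → b ≠ ℓ := by
          intro a b hab hbl
          subst hbl
          have := hf.2 _ _ hab
          rw [hfℓ] at this; cases this
        have hnog : ∀ a b, g a = some b → b ≠ ℓ := by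
          intro a b hab hbl
          subst hbl
          have := hg.2 _ _ hab
          rw [hgℓ] at this; cases this
        have hiff : ∀ z, restrM ℓ f z = none ↔ restrM ℓ g z = none := by
          intro z
          rw [restrM_none, restrM_none]
          constructor
          · rintro (h | h)
            · exact Or.inl ((hfg _).mp h)
            · exact absurd rfl (hnof _ _ h)
          · rintro (h | h)
            · exact Or.inl ((hfg _).mpr h)
            · exact absurd rfl (hnog _ _ h)
        have heq := ih (T.induce {x | x ≠ ℓ}) (by omega) hT' _ _
          (restrM_MFun hf) (restrM_MFun hg) hiff
        by_cases hx : x = ℓ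
        · subst hx; rw [hfℓ, hgℓ]
        · rcases hfx : f x with _ | y
          · exact ((hfg x).mp hfx).symm
          · have hyℓ : y ≠ ℓ := hnof _ _ hfx
            have h2 := heq ⟨x, hx⟩
            rw [restrM_some hfx hyℓ] at h2
            rcases hgx : g x with _ | z
            · rw [(hfg x).mpr hgx] at hfx; cases hfx
            · have hzℓ : z ≠ ℓ := hnog _ _ hgx
              rw [restrM_some hgx hzℓ] at h2
              have : y = z := congrArg Subtype.val (Option.some.inj h2)
              rw [this]
      · -- ℓ covered by p
        have hpadj : T.Adj ℓ p := hf.1 _ _ hfℓ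
        have hpℓ : p ≠ ℓ := hpadj.ne'
        rcases hgℓ0 : g ℓ with _ | p'
        · have := (hfg ℓ).mpr hgℓ0
          rw [hfℓ] at this; cases this
        · have hp' : p' = p := leaf_adj_eq hℓ (hg.1 _ _ hgℓ0) hpadj
          have hgℓ : g ℓ = some p := by rw [hgℓ0, hp']
          have hfp : f p = some ℓ := hf.2 _ _ hfℓ
          have hgp : g p = some ℓ := hg.2 _ _ hgℓ
          have hsomef : ∀ a, f a = some ℓ → a = p := by
            intro a ha
            have := hf.2 _ _ ha
            rw [hfℓ] at this
            exact (Option.some.inj this).symm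
          have hsomeg : ∀ a, g a = some ℓ → a = p := by
            intro a ha
            have := hg.2 _ _ ha
            rw [hgℓ] at this
            exact (Option.some.inj this).symm
          have hiff : ∀ z, restrM ℓ f z = none ↔ restrM ℓ g z = none := by
            intro z
            rw [restrM_none, restrM_none]
            constructor
            · rintro (h | h)
              · exact Or.inl ((hfg _).mp h)
              · right; rw [hsomef _ h]; exact hgp
            · rintro (h | h)
              · exact Or.inl ((hfg _).mpr h)
              · right; rw [hsomeg _ h]; exact hfp
          have heq := ih (T.induce {x | x ≠ ℓ}) (by omega) hT' _ _
            (restrM_MFun hf) (restrM_MFun hg) hiff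
          by_cases hx : x = ℓ
          · subst hx; rw [hfℓ, hgℓ]
          · by_cases hxp : x = p
            · subst hxp; rw [hfp, hgp]
            · rcases hfx : f x with _ | y
              · exact ((hfg x).mp hfx).symm
              · have hyℓ : y ≠ ℓ := fun h => hxp (hsomef _ (h ▸ hfx))
                have h2 := heq ⟨x, hx⟩
                rw [restrM_some hfx hyℓ] at h2
                rcases hgx : g x with _ | z
                · rw [(hfg x).mpr hgx] at hfx; cases hfx
                · have hzℓ : z ≠ ℓ := fun h => hxp (hsomeg _ (h ▸ hgx))
                  rw [restrM_some hgx hzℓ] at h2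
                  have : y = z := congrArg Subtype.val (Option.some.inj h2)
                  rw [this]

lemma exists_good_matching : ∀ (n : ℕ) {V : Type w} [Fintype V] (T : SimpleGraph V),
    Fintype.card V ≤ n → T.IsTree → ∀ v : V,
    ∃ f, MFun T f ∧ f v = none ∧ ∀ x, f x = none → x = v ∨ degN T x = 1 := by
  intro n
  induction n with
  | zero =>
    intro V _ T hn hT v
    have : 0 < Fintype.card V := Fintype.card_pos_iff.mpr ⟨v⟩
    omega
  | succ n ih =>
    intro V _ T hn hT v
    classical
    by_cases hcard : Fintype.card V ≤ 1
    · haveI := Fintype.card_le_one_iff_subsingleton.mp hcard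
      exact ⟨fun _ => none, MFun_none T, rfl, fun x _ => Or.inl (Subsingleton.elim x v)⟩
    · push_neg at hcard
      obtain ⟨ℓ, hℓv, hℓ⟩ := two_leaves hT hcard v
      obtain ⟨p, hpset⟩ := leaf_unique_nbr hℓ
      have hpadj : T.Adj ℓ p := by
        have : p ∈ T.neighborSet ℓ := by rw [hpset]; rfl
        exact this
      have hpℓ : p ≠ ℓ := hpadj.ne'
      have hvℓ : v ≠ ℓ := Ne.symm hℓv
      have hT' : (T.induce {x | x ≠ ℓ}).IsTree := isTree_induce_ne hT hℓ ⟨v, hvℓ⟩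
      have hlt : Fintype.card ↥({x : V | x ≠ ℓ}) < Fintype.card V :=
        Fintype.card_subtype_lt (p := fun y => y ≠ ℓ) (x := ℓ) (by simp)
      obtain ⟨f', hf', hfv', hleaf'⟩ := ih (T.induce {x | x ≠ ℓ}) (by omega) hT' ⟨v, hvℓ⟩
      have hfM : MFun T (extM f') := extM_MFun hf'
      have hfv : extM f' v = none := by rw [extM_none hvℓ]; exact hfv'
      have key : ∀ x, extM f' x = none → x = ℓ ∨ x = v ∨ degN T x = 1 ∨ x = p := by
        intro x hx
        by_cases hxℓ : x = ℓ
        · exact Or.inl hxℓ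
        · rw [extM_none hxℓ] at hx
          rcases hleaf' _ hx with h | h
          · exact Or.inr (Or.inl (congrArg Subtype.val h))
          · rcases leaf_of_induce_leaf _ h with h2 | h2
            · exact Or.inr (Or.inr (Or.inl h2))
            · right; right; right
              have : x ∈ T.neighborSet ℓ := h2.symm
              rw [hpset] at this
              exact this
      by_cases hpcov : extM f' p = none
      · by_cases hpok : p = v ∨ degN T p = 1
        · refine ⟨extM f', hfM, hfv, ?_⟩
          intro x hx
          rcases key x hx with h | h | h | h
          · right; rw [h]; exact hℓ
          · exact Or.inl h
          · exact Or.inr h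
          · rw [h]; exact hpok
        · push_neg at hpok
          refine ⟨addE (extM f') p ℓ, addE_MFun hpadj.symm hfM hpcov extM_ℓ, ?_, ?_⟩
          · rw [addE_other (fun h => hpok.1 h.symm) hvℓ]
            exact hfv
          · intro x hx
            have hxp : x ≠ p := fun h => by rw [h, addE_a] at hx; cases hx
            have hxℓ : x ≠ ℓ := fun h => by rw [h, addE_b hpℓ] at hx; cases hx
            rw [addE_other hxp hxℓ] at hx
            rcases key x hx with h | h | h | h
            · exact absurd h hxℓ
            · exact Or.inl h
            · exact Or.inr h
            · exact absurd h hxp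
      · refine ⟨extM f', hfM, hfv, ?_⟩
        intro x hx
        rcases key x hx with h | h | h | h
        · right; rw [h]; exact hℓ
        · exact Or.inl h
        · exact Or.inr h
        · rw [h] at hx; exact absurd hx hpcov

lemma exists_edge_matching : ∀ (n : ℕ) {V : Type w} [Fintype V] (T : SimpleGraph V),
    Fintype.card V ≤ n → T.IsTree → ∀ u v : V, T.Adj u v →
    ∃ f, MFun T f ∧ f u = some v ∧ ∀ x, f x = none → degN T x = 1 := by
  intro n
  induction n with
  | zero =>
    intro V _ T hn hT u v huv
    have : 0 < Fintype.card V := Fintype.card_pos_iff.mpr ⟨u⟩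
    omega
  | succ n ih =>
    intro V _ T hn hT u v huv
    classical
    have huvne : u ≠ v := huv.ne
    by_cases hex : ∃ ℓ, ℓ ≠ u ∧ ℓ ≠ v ∧ degN T ℓ = 1
    · obtain ⟨ℓ, hℓu, hℓv, hℓ⟩ := hex
      obtain ⟨p, hpset⟩ := leaf_unique_nbr hℓ
      have hpadj : T.Adj ℓ p := by
        have : p ∈ T.neighborSet ℓ := by rw [hpset]; rfl
        exact this
      have hpℓ : p ≠ ℓ := hpadj.ne'
      have huℓ : u ≠ ℓ := Ne.symm hℓu
      have hvℓ : v ≠ ℓ := Ne.symm hℓv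
      have hT' : (T.induce {x | x ≠ ℓ}).IsTree := isTree_induce_ne hT hℓ ⟨u, huℓ⟩
      have hlt : Fintype.card ↥({x : V | x ≠ ℓ}) < Fintype.card V :=
        Fintype.card_subtype_lt (p := fun y => y ≠ ℓ) (x := ℓ) (by simp)
      have huv' : (T.induce {x | x ≠ ℓ}).Adj ⟨u, huℓ⟩ ⟨v, hvℓ⟩ := huv
      obtain ⟨f', hf', hfu', hleaf'⟩ := ih (T.induce {x | x ≠ ℓ}) (by omega) hT' _ _ huv'
      have hfM : MFun T (extM f') := extM_MFun hf'
      have hfu : extM f' u = some v := by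
        rw [extM_ne huℓ, hfu']
        rfl
      have hfv : extM f' v = some u := by
        rw [extM_ne hvℓ, hf'.2 _ _ hfu']
        rfl
      have key : ∀ x, extM f' x = none → x = ℓ ∨ degN T x = 1 ∨ x = p := by
        intro x hx
        by_cases hxℓ : x = ℓ
        · exact Or.inl hxℓ
        · rw [extM_none hxℓ] at hx
          rcases leaf_of_induce_leaf _ (hleaf' _ hx) with h2 | h2
          · exact Or.inr (Or.inl h2)
          · right; right
            have : x ∈ T.neighborSet ℓ := h2.symm
            rw [hpset] at this
            exact this
      by_cases hpcov : extM f' p = none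
      · by_cases hpleaf : degN T p = 1
        · refine ⟨extM f', hfM, hfu, ?_⟩
          intro x hx
          rcases key x hx with h | h | h
          · rw [h]; exact hℓ
          · exact h
          · rw [h]; exact hpleaf
        · have hpu : p ≠ u := fun h => by rw [h, hfu] at hpcov; cases hpcov
          have hpv : p ≠ v := fun h => by rw [h, hfv] at hpcov; cases hpcov
          refine ⟨addE (extM f') p ℓ, addE_MFun hpadj.symm hfM hpcov extM_ℓ, ?_, ?_⟩
          · rw [addE_other (Ne.symm hpu) huℓ]
            exact hfu
          · intro x hx
            have hxp : x ≠ p := fun h => by rw [h, addE_a] at hx; cases hx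
            have hxℓ : x ≠ ℓ := fun h => by rw [h, addE_b hpℓ] at hx; cases hx
            rw [addE_other hxp hxℓ] at hx
            rcases key x hx with h | h | h
            · exact absurd h hxℓ
            · exact h
            · exact absurd h hxp
      · refine ⟨extM f', hfM, hfu, ?_⟩
        intro x hx
        rcases key x hx with h | h | h
        · rw [h]; exact hℓ
        · exact h
        · rw [h] at hx; exact absurd hx hpcov
    · push_neg at hex
      have hcard2 : 1 < Fintype.card V := Fintype.one_lt_card_iff_nontrivial.mpr ⟨⟨u, v, huvne⟩⟩
      obtain ⟨ℓ1, h1u, h1leaf⟩ := two_leaves hT hcard2 u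
      have h1v : ℓ1 = v := by
        by_contra h
        exact hex ℓ1 h1u h h1leaf
      obtain ⟨ℓ2, h2v, h2leaf⟩ := two_leaves hT hcard2 v
      have h2u : ℓ2 = u := by
        by_contra h
        exact hex ℓ2 h h2v h2leaf
      have hvleaf : degN T v = 1 := h1v ▸ h1leaf
      have huleaf : degN T u = 1 := h2u ▸ h2leaf
      have hall : ∀ x : V, x = u ∨ x = v := by
        intro x
        have hclosed : ∀ a ∈ ({u, v} : Set V), ∀ b, T.Adj a b → b ∈ ({u, v} : Set V) := by
          rintro a ha b hb
          rcases ha with rfl | ha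
          · right
            exact leaf_adj_eq huleaf hb huv
          · rw [Set.mem_singleton_iff] at ha
            subst ha
            left
            exact leaf_adj_eq hvleaf hb huv.symm
        obtain ⟨w⟩ := hT.isConnected u x
        have := walk_closed _ hclosed w (Or.inl rfl)
        rcases this with h | h
        · exact Or.inl h
        · exact Or.inr h
      refine ⟨fun x => if x = u then some v else if x = v then some u else none,
        ⟨?_, ?_⟩, ?_, ?_⟩
      · intro x y hxy
        dsimp only at hxy
        split_ifs at hxy with h1 h2
        · cases hxy; rw [h1]; exact huv
        · cases hxy; rw [h2]; exact huv.symm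
      · intro x y hxy
        dsimp only at hxy ⊢
        split_ifs at hxy with h1 h2
        · cases hxy
          rw [if_neg (Ne.symm huvne), if_pos rfl, h1]
        · cases hxy
          rw [if_pos rfl, h2]
      · dsimp only
        rw [if_pos rfl]
      · intro x hx
        dsimp only at hx
        rcases hall x with rfl | rfl
        · rw [if_pos rfl] at hx; cases hx
        · rw [if_neg (Ne.symm huvne), if_pos rfl] at hx; cases hx

lemma tree_coloring : ∀ (n : ℕ) {V : Type w} [Fintype V] (T : SimpleGraph V),
    Fintype.card V ≤ n → T.IsTree → ∃ c : V → Bool, ∀ x y, T.Adj x y → c x ≠ c y := by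
  intro n
  induction n with
  | zero =>
    intro V _ T hn hT
    have : IsEmpty V := Fintype.card_eq_zero_iff.mp (by omega)
    exact ⟨fun _ => false, fun x _ _ => (this.false x).elim⟩
  | succ n ih =>
    intro V _ T hn hT
    classical
    by_cases hcard : Fintype.card V ≤ 1
    · haveI := Fintype.card_le_one_iff_subsingleton.mp hcard
      exact ⟨fun _ => false, fun x y hxy => absurd (Subsingleton.elim x y) hxy.ne⟩
    · push_neg at hcard
      obtain ⟨v0⟩ := Fintype.card_pos_iff.mp (show 0 < Fintype.card V by omega)
      obtain ⟨ℓ, _, hℓ⟩ := two_leaves hT hcard v0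
      obtain ⟨p, hpset⟩ := leaf_unique_nbr hℓ
      have hpadj : T.Adj ℓ p := by
        have : p ∈ T.neighborSet ℓ := by rw [hpset]; rfl
        exact this
      have hpℓ : p ≠ ℓ := hpadj.ne'
      obtain ⟨x0, hx0⟩ := Fintype.exists_ne_of_one_lt_card hcard ℓ
      have hT' : (T.induce {x | x ≠ ℓ}).IsTree := isTree_induce_ne hT hℓ ⟨x0, hx0⟩
      have hlt : Fintype.card ↥({x : V | x ≠ ℓ}) < Fintype.card V :=
        Fintype.card_subtype_lt (p := fun y => y ≠ ℓ) (x := ℓ) (by simp)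
      obtain ⟨c', hc'⟩ := ih (T.induce {x | x ≠ ℓ}) (by omega) hT'
      refine ⟨fun x => if h : x = ℓ then !(c' ⟨p, hpℓ⟩) else c' ⟨x, h⟩, ?_⟩
      intro x y hxy
      dsimp only
      by_cases hx : x = ℓ
      · subst hx
        have hy : y = p := leaf_adj_eq hℓ hxy hpadj
        subst hy
        rw [dif_pos rfl, dif_neg hpℓ]
        simp
      · by_cases hy : y = ℓ
        · subst hy
          have hx2 : x = p := leaf_adj_eq hℓ hxy.symm hpadj
          subst hx2
          rw [dif_neg hpℓ, dif_pos rfl]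
          simp
        · rw [dif_neg hx, dif_neg hy]
          exact hc' _ _ (show (T.induce {x | x ≠ ℓ}).Adj ⟨x, hx⟩ ⟨y, hy⟩ from hxy)

end Inds

section Main
universe y
variable {V : Type y} {T : SimpleGraph V}

lemma lm_ll {u v : V} : (leafMatching T).Adj (Sum.inl u) (Sum.inl v) ↔ T.Adj u v := Iff.rfl
lemma lm_rr {u v : V} : (leafMatching T).Adj (Sum.inr u) (Sum.inr v) ↔ T.Adj u v := Iff.rfl
lemma lm_lr {u v : V} : (leafMatching T).Adj (Sum.inl u) (Sum.inr v) ↔ u = v ∧ degN T u = 1 :=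
  Iff.rfl
lemma lm_rl {u v : V} : (leafMatching T).Adj (Sum.inr u) (Sum.inl v) ↔ u = v ∧ degN T v = 1 :=
  Iff.rfl

def pmF (f : V → Option V) : V ⊕ V → V ⊕ V
  | Sum.inl u => (f u).elim (Sum.inr u) Sum.inl
  | Sum.inr u => (f u).elim (Sum.inl u) Sum.inr

variable {f : V → Option V}

lemma pmF_inl_some {u w : V} (h : f u = some w) : pmF f (Sum.inl u) = Sum.inl w := by
  show (f u).elim _ _ = _
  rw [h]
  rfl

lemma pmF_inl_none {u : V} (h : f u = none) : pmF f (Sum.inl u) = Sum.inr u := by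
  show (f u).elim _ _ = _
  rw [h]
  rfl

lemma pmF_inr_some {u w : V} (h : f u = some w) : pmF f (Sum.inr u) = Sum.inr w := by
  show (f u).elim _ _ = _
  rw [h]
  rfl

lemma pmF_inr_none {u : V} (h : f u = none) : pmF f (Sum.inr u) = Sum.inl u := by
  show (f u).elim _ _ = _
  rw [h]
  rfl

lemma pmF_adj (hf : MFun T f) (hleaf : ∀ x, f x = none → degN T x = 1) :
    ∀ x, (leafMatching T).Adj x (pmF f x) := by
  rintro (u | u) <;> rcases hfu : f u with _ | w
  · rw [pmF_inl_none hfu]; exact ⟨rfl, hleaf u hfu⟩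
  · rw [pmF_inl_some hfu]; exact hf.1 _ _ hfu
  · rw [pmF_inr_none hfu]; exact ⟨rfl, hleaf u hfu⟩
  · rw [pmF_inr_some hfu]; exact hf.1 _ _ hfu

lemma pmF_invol (hf : MFun T f) : ∀ x, pmF f (pmF f x) = x := by
  rintro (u | u) <;> rcases hfu : f u with _ | w
  · rw [pmF_inl_none hfu, pmF_inr_none hfu]
  · rw [pmF_inl_some hfu, pmF_inl_some (hf.2 _ _ hfu)]
  · rw [pmF_inr_none hfu, pmF_inl_none hfu]
  · rw [pmF_inr_some hfu, pmF_inr_some (hf.2 _ _ hfu)]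

def pmSub (T : SimpleGraph V) (f : V → Option V)
    (hadj : ∀ x, (leafMatching T).Adj x (pmF f x))
    (hinv : ∀ x, pmF f (pmF f x) = x) : (leafMatching T).Subgraph where
  verts := Set.univ
  Adj a b := pmF f a = b ∨ pmF f b = a
  adj_sub := by
    rintro a b (rfl | rfl)
    · exact hadj a
    · exact (hadj b).symm
  edge_vert := fun _ => trivial
  symm := by
    constructor
    rintro a b (h | h)
    · exact Or.inr h
    · exact Or.inl h

lemma pmSub_isPM {hadj : ∀ x, (leafMatching T).Adj x (pmF f x)}
    {hinv : ∀ x, pmF f (pmF f x) = x} : (pmSub T f hadj hinv).IsPerfectMatching := by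
  rw [SimpleGraph.Subgraph.isPerfectMatching_iff]
  intro v
  refine ⟨pmF f v, Or.inl rfl, ?_⟩
  rintro y (h | h)
  · exact h.symm
  · have := hinv y
    rw [h] at this
    exact this.symm

lemma lm_connected [Fintype V] (hT : T.IsTree) (hc : 2 ≤ Fintype.card V) :
    (leafMatching T).Connected := by
  obtain ⟨v0⟩ : Nonempty V := Fintype.card_pos_iff.mp (by omega)
  obtain ⟨ℓ, _, hℓ⟩ := two_leaves hT hc v0
  have hcross : (leafMatching T).Adj (Sum.inl ℓ) (Sum.inr ℓ) := ⟨rfl, hℓ⟩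
  have hl : ∀ u v : V, (leafMatching T).Reachable (Sum.inl u) (Sum.inl v) := fun u v =>
    Reachable.map (⟨Sum.inl, fun {a b} h => h⟩ : T →g leafMatching T) (hT.isConnected u v)
  have hr : ∀ u v : V, (leafMatching T).Reachable (Sum.inr u) (Sum.inr v) := fun u v =>
    Reachable.map (⟨Sum.inr, fun {a b} h => h⟩ : T →g leafMatching T) (hT.isConnected u v)
  haveI : Nonempty (V ⊕ V) := ⟨Sum.inl v0⟩
  apply SimpleGraph.Connected.mk
  rintro (u | u) (v | v)
  · exact hl u v
  · exact (hl u ℓ).trans (hcross.reachable.trans (hr ℓ v))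
  · exact ((hl v ℓ).trans (hcross.reachable.trans (hr ℓ u))).symm
  · exact hr u v

lemma lm_colorable [Fintype V] (hT : T.IsTree) : (leafMatching T).Colorable 2 := by
  obtain ⟨c, hc⟩ := tree_coloring (Fintype.card V) T le_rfl hT
  have C : (leafMatching T).Coloring Bool := by
    refine SimpleGraph.Coloring.mk
      (fun x => match x with | Sum.inl u => c u | Sum.inr u => !c u) ?_
    rintro (u | u) (v | v) hadj
    · exact hc _ _ hadj
    · obtain ⟨rfl, -⟩ := hadj
      simp
    · obtain ⟨rfl, -⟩ := hadj
      simp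
    · intro h
      exact hc _ _ hadj (by simpa using h)
  simpa using C.colorable

lemma lm_mc [Fintype V] (hT : T.IsTree) (hc : 2 ≤ Fintype.card V) :
    MatchingCovered (leafMatching T) := by
  refine ⟨lm_connected hT hc, by rw [Fintype.card_sum]; omega, ?_⟩
  intro e he
  induction e using Sym2.ind with
  | _ x y =>
    rw [SimpleGraph.mem_edgeSet] at he
    rcases x with u | u <;> rcases y with v | v
    · obtain ⟨f, hf, hfu, hleaf⟩ := exists_edge_matching (Fintype.card V) T le_rfl hT u v he
      exact ⟨pmSub T f (pmF_adj hf hleaf) (pmF_invol hf), pmSub_isPM,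
        Or.inl (pmF_inl_some hfu)⟩
    · obtain ⟨rfl, hu⟩ := he
      obtain ⟨f, hf, hfu, hleaf0⟩ := exists_good_matching (Fintype.card V) T le_rfl hT u
      have hleaf : ∀ x, f x = none → degN T x = 1 :=
        fun x hx => (hleaf0 x hx).elim (fun h => h ▸ hu) id
      exact ⟨pmSub T f (pmF_adj hf hleaf) (pmF_invol hf), pmSub_isPM,
        Or.inl (pmF_inl_none hfu)⟩
    · obtain ⟨rfl, hu⟩ := he
      obtain ⟨f, hf, hfu, hleaf0⟩ := exists_good_matching (Fintype.card V) T le_rfl hT u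
      have hleaf : ∀ x, f x = none → degN T x = 1 :=
        fun x hx => (hleaf0 x hx).elim (fun h => h ▸ hu) id
      exact ⟨pmSub T f (pmF_adj hf hleaf) (pmF_invol hf), pmSub_isPM,
        Or.inr (pmF_inl_none hfu)⟩
    · obtain ⟨f, hf, hfu, hleaf⟩ := exists_edge_matching (Fintype.card V) T le_rfl hT u v he
      exact ⟨pmSub T f (pmF_adj hf hleaf) (pmF_invol hf), pmSub_isPM,
        Or.inl (pmF_inr_some hfu)⟩

lemma extract_fns [Fintype V] (e : Sym2 (V ⊕ V))
    (N : ((leafMatching T).deleteEdges {e}).Subgraph) (hN : N.IsPerfectMatching) :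
    ∃ fL fR : V → Option V, MFun T fL ∧ MFun T fR ∧ (∀ x, fL x = none ↔ fR x = none) ∧
      (∀ u w, fL u = some w ↔ N.Adj (Sum.inl u) (Sum.inl w)) ∧
      (∀ u w, fR u = some w ↔ N.Adj (Sum.inr u) (Sum.inr w)) := by
  classical
  have hpm := SimpleGraph.Subgraph.isPerfectMatching_iff.mp hN
  have hex : ∀ x, ∃ y, N.Adj x y := fun x => (hpm x).exists
  have huniq : ∀ x y y', N.Adj x y → N.Adj x y' → y = y' := by
    intro x y y' h1 h2
    obtain ⟨z, -, hz⟩ := hpm x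
    rw [hz y h1, hz y' h2]
  have hGadj : ∀ x y, N.Adj x y → (leafMatching T).Adj x y := by
    intro x y h
    have := N.adj_sub h
    rw [SimpleGraph.deleteEdges_adj] at this
    exact this.1
  set fL : V → Option V :=
    fun u => if h : ∃ w, N.Adj (Sum.inl u) (Sum.inl w) then some h.choose else none with hfL
  set fR : V → Option V :=
    fun u => if h : ∃ w, N.Adj (Sum.inr u) (Sum.inr w) then some h.choose else none with hfR
  have hLsome : ∀ u w, fL u = some w ↔ N.Adj (Sum.inl u) (Sum.inl w) := by
    intro u w
    rw [hfL]
    dsimp only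
    constructor
    · intro h
      by_cases hh : ∃ w', N.Adj (Sum.inl u) (Sum.inl w')
      · rw [dif_pos hh] at h
        have h2 := hh.choose_spec
        rwa [Option.some.inj h] at h2
      · rw [dif_neg hh] at h
        cases h
    · intro h
      have hh : ∃ w', N.Adj (Sum.inl u) (Sum.inl w') := ⟨w, h⟩
      rw [dif_pos hh]
      exact congrArg some (Sum.inl.inj (huniq _ _ _ hh.choose_spec h))
  have hRsome : ∀ u w, fR u = some w ↔ N.Adj (Sum.inr u) (Sum.inr w) := by
    intro u w
    rw [hfR]
    dsimp only
    constructor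
    · intro h
      by_cases hh : ∃ w', N.Adj (Sum.inr u) (Sum.inr w')
      · rw [dif_pos hh] at h
        have h2 := hh.choose_spec
        rwa [Option.some.inj h] at h2
      · rw [dif_neg hh] at h
        cases h
    · intro h
      have hh : ∃ w', N.Adj (Sum.inr u) (Sum.inr w') := ⟨w, h⟩
      rw [dif_pos hh]
      exact congrArg some (Sum.inr.inj (huniq _ _ _ hh.choose_spec h))
  have hLnone : ∀ u, fL u = none → N.Adj (Sum.inl u) (Sum.inr u) := by
    intro u h
    obtain ⟨y, hy⟩ := hex (Sum.inl u)
    rcases y with w | w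
    · rw [(hLsome u w).mpr hy] at h
      cases h
    · obtain ⟨rfl, -⟩ := lm_lr.mp (hGadj _ _ hy)
      exact hy
  have hRnone : ∀ u, fR u = none → N.Adj (Sum.inr u) (Sum.inl u) := by
    intro u h
    obtain ⟨y, hy⟩ := hex (Sum.inr u)
    rcases y with w | w
    · obtain ⟨rfl, -⟩ := lm_rl.mp (hGadj _ _ hy)
      exact hy
    · rw [(hRsome u w).mpr hy] at h
      cases h
  have hLM : MFun T fL := by
    constructor
    · intro x y h
      exact lm_ll.mp (hGadj _ _ ((hLsome x y).mp h))
    · intro x y h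
      exact (hLsome y x).mpr (N.adj_symm ((hLsome x y).mp h))
  have hRM : MFun T fR := by
    constructor
    · intro x y h
      exact lm_rr.mp (hGadj _ _ ((hRsome x y).mp h))
    · intro x y h
      exact (hRsome y x).mpr (N.adj_symm ((hRsome x y).mp h))
  have hsame : ∀ x, fL x = none ↔ fR x = none := by
    intro x
    constructor
    · intro h
      rcases hfx : fR x with _ | w
      · rfl
      · have h1 := (hRsome x w).mp hfx
        have h2 := N.adj_symm (hLnone x h)
        exact absurd (huniq _ _ _ h2 h1) (by simp)
    · intro h
      rcases hfx : fL x with _ | w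
      · rfl
      · have h1 := (hLsome x w).mp hfx
        have h2 := N.adj_symm (hRnone x h)
        exact absurd (huniq _ _ _ h2 h1) (by simp)
  exact ⟨fL, fR, hLM, hRM, hsame, hLsome, hRsome⟩

end Main


section Min
universe y
variable {V : Type y} {T : SimpleGraph V} [Fintype V]

lemma del_tree_not_mc_l (hT : T.IsTree) {u v : V} (huv : T.Adj u v) :
    ¬ MatchingCovered ((leafMatching T).deleteEdges {s(Sum.inl u, Sum.inl v)}) := by
  rintro ⟨-, -, hall⟩
  have hf' : s(Sum.inr u, Sum.inr v) ∈
      ((leafMatching T).deleteEdges {s(Sum.inl u, Sum.inl v)}).edgeSet := by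
    rw [SimpleGraph.mem_edgeSet, SimpleGraph.deleteEdges_adj]
    refine ⟨huv, ?_⟩
    simp [Sym2.eq_iff]
  obtain ⟨N, hN, hmem⟩ := hall _ hf'
  obtain ⟨fL, fR, hLM, hRM, hsame, hLsome, hRsome⟩ := extract_fns _ N hN
  have hfR : fR u = some v := (hRsome u v).mpr (SimpleGraph.Subgraph.mem_edgeSet.mp hmem)
  have hfL : fL u ≠ some v := by
    intro h
    have h2 := N.adj_sub ((hLsome u v).mp h)
    rw [SimpleGraph.deleteEdges_adj] at h2
    exact h2.2 (by simp)
  exact hfL ((matching_unique (Fintype.card V) T le_rfl hT fL fR hLM hRM hsame u).trans hfR)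

lemma del_tree_not_mc_r (hT : T.IsTree) {u v : V} (huv : T.Adj u v) :
    ¬ MatchingCovered ((leafMatching T).deleteEdges {s(Sum.inr u, Sum.inr v)}) := by
  rintro ⟨-, -, hall⟩
  have hf' : s(Sum.inl u, Sum.inl v) ∈
      ((leafMatching T).deleteEdges {s(Sum.inr u, Sum.inr v)}).edgeSet := by
    rw [SimpleGraph.mem_edgeSet, SimpleGraph.deleteEdges_adj]
    refine ⟨huv, ?_⟩
    simp [Sym2.eq_iff]
  obtain ⟨N, hN, hmem⟩ := hall _ hf'
  obtain ⟨fL, fR, hLM, hRM, hsame, hLsome, hRsome⟩ := extract_fns _ N hN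
  have hfL : fL u = some v := (hLsome u v).mpr (SimpleGraph.Subgraph.mem_edgeSet.mp hmem)
  have hfR : fR u ≠ some v := by
    intro h
    have h2 := N.adj_sub ((hRsome u v).mp h)
    rw [SimpleGraph.deleteEdges_adj] at h2
    exact h2.2 (by simp)
  exact hfR (((matching_unique (Fintype.card V) T le_rfl hT fL fR hLM hRM hsame u).symm.trans
    hfL))

lemma del_cross_not_mc (hT : T.IsTree) {v : V} (hv : degN T v = 1) :
    ¬ MatchingCovered ((leafMatching T).deleteEdges {s(Sum.inl v, Sum.inr v)}) := by
  rintro ⟨-, -, hall⟩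
  obtain ⟨p, hpset⟩ := leaf_unique_nbr hv
  have hpadj : T.Adj v p := by
    have : p ∈ T.neighborSet v := by rw [hpset]; rfl
    exact this
  have hpv : p ≠ v := hpadj.ne'
  classical
  by_cases hp : degN T p = 1
  · have hf' : s(Sum.inl p, Sum.inr p) ∈
        ((leafMatching T).deleteEdges {s(Sum.inl v, Sum.inr v)}).edgeSet := by
      rw [SimpleGraph.mem_edgeSet, SimpleGraph.deleteEdges_adj]
      refine ⟨⟨rfl, hp⟩, ?_⟩
      simp [Sym2.eq_iff, hpv]
    obtain ⟨N, hN, hmem⟩ := hall _ hf'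
    have hpm := SimpleGraph.Subgraph.isPerfectMatching_iff.mp hN
    obtain ⟨y, hy⟩ := (hpm (Sum.inl v)).exists
    have hyG := N.adj_sub hy
    rw [SimpleGraph.deleteEdges_adj] at hyG
    rcases y with w | w
    · have hw : w = p := leaf_adj_eq hv (lm_ll.mp hyG.1) hpadj
      rw [hw] at hy
      have h1 : N.Adj (Sum.inl p) (Sum.inl v) := N.adj_symm hy
      have h2 : N.Adj (Sum.inl p) (Sum.inr p) := SimpleGraph.Subgraph.mem_edgeSet.mp hmem
      obtain ⟨z, -, hz⟩ := hpm (Sum.inl p)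
      have := (hz _ h1).trans (hz _ h2).symm
      simp at this
    · obtain ⟨rfl, -⟩ := lm_lr.mp hyG.1
      exact hyG.2 rfl
  · have hq : ∃ q, T.Adj p q ∧ q ≠ v := by
      by_contra hno
      push_neg at hno
      apply hp
      have : T.neighborSet p = {v} :=
        Set.eq_singleton_iff_unique_mem.mpr ⟨hpadj.symm, fun y hy => hno y hy⟩
      rw [degN, this, Set.ncard_singleton]
    obtain ⟨q, hpq, hqv⟩ := hq
    have hf' : s(Sum.inr p, Sum.inr q) ∈
        ((leafMatching T).deleteEdges {s(Sum.inl v, Sum.inr v)}).edgeSet := by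
      rw [SimpleGraph.mem_edgeSet, SimpleGraph.deleteEdges_adj]
      refine ⟨hpq, ?_⟩
      simp [Sym2.eq_iff]
    obtain ⟨N, hN, hmem⟩ := hall _ hf'
    have hpm := SimpleGraph.Subgraph.isPerfectMatching_iff.mp hN
    obtain ⟨y, hy⟩ := (hpm (Sum.inr v)).exists
    have hyG := N.adj_sub hy
    rw [SimpleGraph.deleteEdges_adj] at hyG
    rcases y with w | w
    · obtain ⟨rfl, -⟩ := lm_rl.mp hyG.1
      exact hyG.2 Sym2.eq_swap
    · have hw : w = p := leaf_adj_eq hv (lm_rr.mp hyG.1) hpadj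
      rw [hw] at hy
      have h1 : N.Adj (Sum.inr p) (Sum.inr v) := N.adj_symm hy
      have h2 : N.Adj (Sum.inr p) (Sum.inr q) := SimpleGraph.Subgraph.mem_edgeSet.mp hmem
      obtain ⟨z, -, hz⟩ := hpm (Sum.inr p)
      have := (hz _ h1).trans (hz _ h2).symm
      exact hqv (Sum.inr.inj this).symm

end Min

theorem stmt5 {V : Type*} [Fintype V] (T : SimpleGraph V)
    (hT : T.IsTree) (hcard : 2 ≤ Fintype.card V) :
    (leafMatching T).Colorable 2 ∧ MinimalMatchingCovered (leafMatching T) := by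
  refine ⟨lm_colorable hT, lm_mc hT hcard, ?_⟩
  intro e he
  induction e using Sym2.ind with
  | _ x y =>
    rw [SimpleGraph.mem_edgeSet] at he
    rcases x with u | u <;> rcases y with v | v
    · exact del_tree_not_mc_l hT he
    · obtain ⟨rfl, hu⟩ := he
      exact del_cross_not_mc hT hu
    · obtain ⟨rfl, hu⟩ := he
      have hswap : s(Sum.inr u, Sum.inl u) = s(Sum.inl u, Sum.inr u) := Sym2.eq_swap
      rw [hswap]
      exact del_cross_not_mc hT hu
    · exact del_tree_not_mc_r hT he
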